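/- arXiv:1305.2610 — 2 statements merged into one kernel-verified Lean document; each statement's English description precedes it below -/
import Mathlib

section
/- Let k ≥ 2 and p ∈ Δ_k with p_1 ≥ p_2 ≥ … ≥ p_k, and suppose p_1 = … = p_i > p_{i+1} for some i ∈ {1,…,k−1}. Then F^n(p) converges, as n → ∞, to the vector whose first i coordinates equal 1/(2i−1), whose coordinates i+1 through k equal 0, and whose last coordinate equals (i−1)/(2i−1). -/
open Filter Topology

/-- The map F on ℝ^{k+1} (coordinates indexed 0,…,k; the last coordinate is the
"empty" state).  For i < k, F_i(x) = x_i² + 2 x_i x_k; the last coordinate is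
F_k(x) = x_k² + 2 Σ_{a<b<k} x_a x_b. -/
noncomputable def Fmap (k : ℕ) (x : Fin (k + 1) → ℝ) : Fin (k + 1) → ℝ :=
  fun i =>
    if i.val < k then x i ^ 2 + 2 * x i * x (Fin.last k)
    else x (Fin.last k) ^ 2 +
      2 * ∑ a : Fin (k + 1), ∑ b : Fin (k + 1),
        (if a.val < b.val ∧ b.val < k then x a * x b else 0)

/-- The open simplex Δ_k ⊆ ℝ^{k+1}. -/
def simplex (k : ℕ) : Set (Fin (k + 1) → ℝ) :=
  {p | (∑ i, p i) = 1 ∧ ∀ i, 0 < p i}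

open Finset

lemma Fmap_lt (k : ℕ) (x : Fin (k+1) → ℝ) (j : Fin (k+1)) (h : j.val < k) :
    Fmap k x j = x j ^ 2 + 2 * x j * x (Fin.last k) := by
  simp [Fmap, h]

lemma Fmap_last (k : ℕ) (x : Fin (k+1) → ℝ) :
    Fmap k x (Fin.last k) = x (Fin.last k) ^ 2 +
      2 * ∑ a : Fin (k + 1), ∑ b : Fin (k + 1),
        (if a.val < b.val ∧ b.val < k then x a * x b else 0) := by
  simp [Fmap]

lemma sq_sum_range (u : ℕ → ℝ) (n : ℕ) :
    (∑ j ∈ range n, u j)^2 = ∑ j ∈ range n, (u j)^2 +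
      2 * ∑ a ∈ range n, ∑ b ∈ range n, (if a < b then u a * u b else 0) := by
  induction n with
  | zero => simp
  | succ n ih =>
    rw [Finset.sum_range_succ (f := u), Finset.sum_range_succ (f := fun j => (u j)^2),
      Finset.sum_range_succ (f := fun a => ∑ b ∈ range (n+1), (if a < b then u a * u b else 0))]
    have h1 : ∑ b ∈ range (n+1), (if n < b then u n * u b else 0) = 0 := by
      apply Finset.sum_eq_zero
      intro b hb
      rw [if_neg]
      simp only [Finset.mem_range] at hb
      omega
    have h2 : ∀ a, a ∈ range n → (∑ b ∈ range (n+1), (if a < b then u a * u b else 0))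
        = (∑ b ∈ range n, (if a < b then u a * u b else 0)) + u a * u n := by
      intro a ha
      simp only [Finset.mem_range] at ha
      rw [Finset.sum_range_succ, if_pos ha]
    rw [Finset.sum_congr rfl h2, h1, Finset.sum_add_distrib, ← Finset.sum_mul]
    linear_combination ih

lemma Fmap_sum (k : ℕ) (x : Fin (k+1) → ℝ) :
    ∑ j, Fmap k x j = (∑ j, x j)^2 := by
  set u : ℕ → ℝ := fun j => if h : j < k + 1 then x ⟨j, h⟩ else 0 with hu
  have hux : ∀ j : Fin (k+1), x j = u j.val := by
    intro j; simp [hu, j.isLt, not_lt.2 (Fin.is_le j)]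
  have hlast : x (Fin.last k) = u k := by rw [hux]; rfl
  have hds : (∑ a : Fin (k + 1), ∑ b : Fin (k + 1),
        (if a.val < b.val ∧ b.val < k then x a * x b else 0))
      = ∑ a ∈ range k, ∑ b ∈ range k, (if a < b then u a * u b else 0) := by
    have step1 : ∀ a : ℕ, (∑ b : Fin (k+1), (if a < b.val ∧ b.val < k then u a * u b.val else 0))
        = ∑ b ∈ range (k+1), (if a < b ∧ b < k then u a * u b else 0) :=
      fun a => Fin.sum_univ_eq_sum_range (fun b => if a < b ∧ b < k then u a * u b else 0) (k+1)
    calc (∑ a : Fin (k + 1), ∑ b : Fin (k + 1),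
        (if a.val < b.val ∧ b.val < k then x a * x b else 0))
        = ∑ a : Fin (k + 1), ∑ b : Fin (k+1),
            (if (a.val : ℕ) < b.val ∧ b.val < k then u a.val * u b.val else 0) := by
          apply Finset.sum_congr rfl; intro a _; apply Finset.sum_congr rfl; intro b _
          rw [← hux, ← hux]
      _ = ∑ a : Fin (k+1), ∑ b ∈ range (k+1),
            (if (a.val : ℕ) < b ∧ b < k then u a.val * u b else 0) := by
          apply Finset.sum_congr rfl; intro a _; exact step1 a.val
      _ = ∑ a ∈ range (k+1), ∑ b ∈ range (k+1), (if a < b ∧ b < k then u a * u b else 0) :=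
          Fin.sum_univ_eq_sum_range
            (fun a => ∑ b ∈ range (k+1), (if a < b ∧ b < k then u a * u b else 0)) (k+1)
      _ = ∑ a ∈ range k, ∑ b ∈ range k, (if a < b then u a * u b else 0) := by
          rw [Finset.sum_range_succ]
          have hz : (∑ b ∈ range (k+1), (if k < b ∧ b < k then u k * u b else 0)) = 0 := by
            apply Finset.sum_eq_zero; intro b _; rw [if_neg]; omega
          rw [hz, add_zero]
          apply Finset.sum_congr rfl; intro a _
          rw [Finset.sum_range_succ, if_neg (by omega), add_zero]
          apply Finset.sum_congr rfl; intro b hb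
          simp only [Finset.mem_range] at hb
          rw [if_congr (and_iff_left hb) rfl rfl]
  have hxsum : (∑ j, x j) = ∑ j ∈ range k, u j + u k := by
    rw [Fin.sum_univ_castSucc, ← hlast]
    congr 1
    rw [show (∑ j : Fin k, x j.castSucc) = ∑ j : Fin k, u j.val by
      apply Finset.sum_congr rfl; intro j _; rw [hux]; rfl]
    exact Fin.sum_univ_eq_sum_range (fun j => u j) k
  have hmain : (∑ j : Fin k, Fmap k x j.castSucc) =
      ∑ j ∈ range k, (u j ^ 2 + 2 * u j * u k) := by
    rw [show (∑ j : Fin k, Fmap k x j.castSucc)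
        = ∑ j : Fin k, (u j.val ^ 2 + 2 * u j.val * u k) by
      apply Finset.sum_congr rfl; intro j _
      rw [Fmap_lt k x j.castSucc (by simpa using j.isLt), hux j.castSucc, hlast]
      simp]
    exact Fin.sum_univ_eq_sum_range (fun j => u j ^ 2 + 2 * u j * u k) k
  rw [Fin.sum_univ_castSucc (f := Fmap k x), hmain, Fmap_last, hds, hxsum, hlast]
  have hexp : ∑ j ∈ range k, (u j ^ 2 + 2 * u j * u k)
      = (∑ j ∈ range k, (u j)^2) + 2 * (∑ j ∈ range k, u j) * u k := by
    rw [Finset.sum_add_distrib, ← Finset.sum_mul, ← Finset.mul_sum]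
  rw [hexp]
  linear_combination -sq_sum_range u k

/-- geometric decay with contraction + vanishing perturbation -/
lemma tendsto_zero_of_contract (e : ℕ → ℝ) (μ C lam : ℝ) (hμ0 : 0 ≤ μ) (hμ1 : μ < 1)
    (hl0 : 0 ≤ lam) (hl1 : lam < 1) (hC : 0 ≤ C) (hpos : ∀ n, 0 ≤ e n)
    (hstep : ∀ n, e (n+1) ≤ μ * e n + C * lam ^ n) :
    Filter.Tendsto e atTop (𝓝 0) := by
  set ν : ℝ := max μ lam with hν
  set ρ : ℝ := (1 + ν)/2 with hρ
  have hν0 : 0 ≤ ν := le_trans hμ0 (le_max_left _ _)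
  have hν1 : ν < 1 := max_lt hμ1 hl1
  have hνρ : ν < ρ := by rw [hρ]; linarith
  have hρ1 : ρ < 1 := by rw [hρ]; linarith
  have hρ0 : 0 ≤ ρ := by rw [hρ]; linarith
  set A : ℝ := max (e 0) (C/(ρ - ν)) with hA
  have hA0 : e 0 ≤ A := le_max_left _ _
  have hAC : C ≤ A * (ρ - ν) := by
    have : C/(ρ - ν) ≤ A := le_max_right _ _
    rw [div_le_iff₀ (by linarith)] at this
    linarith
  have hbound : ∀ n, e n ≤ A * ρ ^ n := by
    intro n
    induction n with
    | zero => simpa using hA0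
    | succ n ih =>
      have h1 : e (n+1) ≤ μ * e n + C * lam ^ n := hstep n
      have h2 : μ * e n ≤ ν * (A * ρ ^ n) := by
        have := hpos n
        have hμν : μ ≤ ν := le_max_left _ _
        nlinarith
      have h3 : lam ^ n ≤ ρ ^ n := pow_le_pow_left₀ hl0 (le_trans (le_max_right μ lam) hνρ.le) n
      have h4 : C * lam ^ n ≤ A * (ρ - ν) * ρ ^ n := by
        have hρn : 0 ≤ ρ ^ n := pow_nonneg hρ0 n
        have hln : 0 ≤ lam ^ n := pow_nonneg hl0 n
        nlinarith
      calc e (n+1) ≤ μ * e n + C * lam ^ n := h1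
        _ ≤ ν * (A * ρ ^ n) + A * (ρ - ν) * ρ ^ n := by linarith
        _ = A * ρ ^ (n+1) := by ring
  have hlim : Filter.Tendsto (fun n => A * ρ ^ n) atTop (𝓝 0) := by
    have := (tendsto_pow_atTop_nhds_zero_of_lt_one hρ0 hρ1).const_mul A
    simpa using this
  exact squeeze_zero hpos hbound hlim

lemma Fmap_simplex (k : ℕ) (x : Fin (k+1) → ℝ) (hx : x ∈ simplex k) :
    Fmap k x ∈ simplex k := by
  obtain ⟨hsum, hpos⟩ := hx
  constructor
  · rw [Fmap_sum, hsum]; norm_num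
  · intro j
    by_cases hj : j.val < k
    · rw [Fmap_lt k x j hj]
      have := hpos j
      have := hpos (Fin.last k)
      positivity
    · have hjl : j = Fin.last k := by
        apply Fin.ext; have := j.isLt; simp [Fin.val_last]; omega
      rw [hjl, Fmap_last]
      have h1 : (0:ℝ) < x (Fin.last k) ^ 2 := by
        have := hpos (Fin.last k); positivity
      have h2 : (0:ℝ) ≤ ∑ a : Fin (k + 1), ∑ b : Fin (k + 1),
          (if a.val < b.val ∧ b.val < k then x a * x b else 0) := by
        apply Finset.sum_nonneg; intro a _
        apply Finset.sum_nonneg; intro b _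
        by_cases h : a.val < b.val ∧ b.val < k
        · rw [if_pos h]; exact le_of_lt (mul_pos (hpos a) (hpos b))
        · rw [if_neg h]
      linarith

set_option maxHeartbeats 10000000 in
/-- If p_1 ≥ ⋯ ≥ p_k and p_1 = ⋯ = p_i > p_{i+1} for some 1 ≤ i ≤ k−1
(0-indexed: coordinates 0,…,i−1 are equal and > coordinate i), then F^n(p)
converges to the vector whose first i coordinates are 1/(2i−1), whose
coordinates i+1,…,k are 0, and whose last coordinate is (i−1)/(2i−1). -/
theorem tendsto_of_strict_leader (k : ℕ) (hk : 2 ≤ k) (p : Fin (k + 1) → ℝ)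
    (hp : p ∈ simplex k)
    (hsort : ∀ j : ℕ, (hj : j + 1 < k) →
      p ⟨j + 1, by omega⟩ ≤ p ⟨j, by omega⟩)
    (i : ℕ) (hi1 : 1 ≤ i) (hik : i < k)
    (heq : ∀ j : ℕ, (hj : j < i) → p ⟨j, by omega⟩ = p 0)
    (hlt : p ⟨i, by omega⟩ < p 0) :
    Tendsto (fun n => (Fmap k)^[n] p) atTop
      (𝓝 (fun j => if j.val < i then 1 / (2 * (i : ℝ) - 1)
                    else if j.val < k then 0
                    else ((i : ℝ) - 1) / (2 * (i : ℝ) - 1))) := by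
  obtain ⟨q, hq⟩ : ∃ q : ℕ → Fin (k + 1) → ℝ, ∀ n, q n = (Fmap k)^[n] p := ⟨_, fun _ => rfl⟩
  rw [show (fun n => (Fmap k)^[n] p) = q from (funext hq).symm]
  have hq0 : q 0 = p := hq 0
  have hqs : ∀ n, q (n + 1) = Fmap k (q n) := fun n => by
    rw [hq, hq, Function.iterate_succ_apply']
  obtain ⟨w, hwq⟩ : ∃ w : ℕ → ℕ → ℝ,
      ∀ n j, w n j = if h : j < k + 1 then q n ⟨j, h⟩ else 0 := ⟨_, fun _ _ => rfl⟩
  have hw : ∀ n (j : Fin (k+1)), q n j = w n j.val := by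
    intro n j; rw [hwq]; simp [j.isLt]
  -- simplex invariant
  have hsimp : ∀ n, q n ∈ simplex k := by
    intro n; induction n with
    | zero => rw [hq0]; exact hp
    | succ n ih => rw [hqs]; exact Fmap_simplex k (q n) ih
  have hpos : ∀ n (j : ℕ) (h : j < k + 1), 0 < w n j := by
    intro n j h; rw [hwq]; simp only [h, dif_pos]; exact (hsimp n).2 _
  have hsum : ∀ n, ∑ j ∈ range (k+1), w n j = 1 := by
    intro n
    have := (hsimp n).1
    rw [← this]
    rw [show (∑ j : Fin (k+1), q n j) = ∑ j : Fin (k+1), w n j.val from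
      Finset.sum_congr rfl (fun j _ => hw n j)]
    exact (Fin.sum_univ_eq_sum_range (fun j => w n j) (k+1)).symm
  have hsplit : ∀ n, ∑ j ∈ range k, w n j + w n k = 1 := by
    intro n; rw [← hsum n, Finset.sum_range_succ]
  -- step formula
  have hstep : ∀ n (j : ℕ), j < k → w (n+1) j = w n j ^ 2 + 2 * w n j * w n k := by
    intro n j hj
    have hj1 : j < k + 1 := by omega
    have h1 : w (n+1) j = q (n+1) ⟨j, hj1⟩ := by rw [hwq]; simp [hj1]
    rw [h1, hqs, Fmap_lt k (q n) ⟨j, hj1⟩ hj, hw n ⟨j, hj1⟩, hw n (Fin.last k)]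
    simp [Fin.val_last]
  -- bridge to p at time 0
  have hw0p : ∀ (j : ℕ) (h : j < k + 1), w 0 j = p ⟨j, h⟩ := by
    intro j h; rw [hwq]; simp [h, hq0]
  -- leaders equal
  have hlead : ∀ n (j : ℕ), j < i → w n j = w n 0 := by
    intro n
    induction n with
    | zero =>
      intro j hj
      rw [hw0p j (by omega), hw0p 0 (by omega), heq j hj]
      congr 1
    | succ n ih =>
      intro j hj
      rw [hstep n j (by omega), hstep n 0 (by omega), ih j hj]
  -- dominance
  have hdom : ∀ n (j : ℕ), i ≤ j → j < k → w n j ≤ w n i := by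
    intro n
    induction n with
    | zero =>
      have hmono : ∀ (l m : ℕ), m ≤ l → l < k → w 0 l ≤ w 0 m := by
        intro l
        induction l with
        | zero => intro m hm _; interval_cases m; exact le_refl _
        | succ l ihl =>
          intro m hm hlk
          rcases Nat.eq_or_lt_of_le hm with h | h
          · rw [h]
          · have h1 : w 0 (l+1) ≤ w 0 l := by
              rw [hw0p (l+1) (by omega), hw0p l (by omega)]
              exact hsort l hlk
            exact le_trans h1 (ihl m (by omega) (by omega))
      intro j hj hjk
      exact hmono j i hj hjk
    | succ n ih =>
      intro j hj hjk
      rw [hstep n j hjk, hstep n i hik]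
      have h1 : 0 < w n j := hpos n j (by omega)
      have h2 : w n j ≤ w n i := ih j hj hjk
      have h3 : 0 < w n k := hpos n k (by omega)
      nlinarith
  -- constants
  have hkR : (2:ℝ) ≤ (k:ℝ) := by exact_mod_cast hk
  have hk0 : (0:ℝ) < (k:ℝ) := by linarith
  have hzfin : (0 : Fin (k+1)) = ⟨0, by omega⟩ := by ext; simp
  obtain ⟨t0, ht0def⟩ : ∃ t : ℝ, t = 1 - w 0 k := ⟨_, rfl⟩
  obtain ⟨tau, htaudef⟩ : ∃ t : ℝ, t = min t0 (1/(4*(k:ℝ)^2)) := ⟨_, rfl⟩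
  obtain ⟨del, hdeldef⟩ : ∃ t : ℝ, t = tau / k := ⟨_, rfl⟩
  obtain ⟨R0, hR0def⟩ : ∃ t : ℝ, t = w 0 i / w 0 0 := ⟨_, rfl⟩
  obtain ⟨lam, hlamdef⟩ : ∃ t : ℝ, t = 1 - (1 - R0) * del / (del + 2) := ⟨_, rfl⟩
  have ht0pos : 0 < t0 := by
    have h1 := hsplit 0
    rw [ht0def]
    have h2 : w 0 0 ≤ ∑ j ∈ range k, w 0 j :=
      Finset.single_le_sum (fun j hj => (hpos 0 j (by simp only [mem_range] at hj; omega)).le)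
        (Finset.mem_range.2 (by omega))
    have := hpos 0 0 (by omega)
    rw [ht0def] at *; linarith
  have htaupos : 0 < tau := htaudef ▸ lt_min ht0pos (by positivity)
  have hdelpos : 0 < del := hdeldef ▸ div_pos htaupos hk0
  have hR0pos : 0 < R0 := hR0def ▸ div_pos (hpos 0 i (by omega)) (hpos 0 0 (by omega))
  have hR01 : R0 < 1 := by
    rw [hR0def, div_lt_one (hpos 0 0 (by omega))]
    rw [hw0p i (by omega), hw0p 0 (by omega), ← hzfin]
    exact hlt
  have h1R0 : 0 < 1 - R0 := by linarith
  have hlam1 : lam < 1 := by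
    rw [hlamdef]
    have : 0 < (1 - R0) * del / (del + 2) :=
      div_pos (mul_pos h1R0 hdelpos) (by linarith)
    linarith
  have hlam0 : 0 < lam := by
    rw [hlamdef]
    have h1 : (1 - R0) * del / (del + 2) < 1 := by
      rw [div_lt_one (by linarith)]
      nlinarith
    linarith
  -- the key invariant
  have key : ∀ n, tau ≤ 1 - w n k ∧ w n i ≤ R0 * lam ^ n * w n 0 := by
    intro n
    induction n with
    | zero =>
      constructor
      · rw [← ht0def, htaudef]; exact min_le_left _ _
      · rw [pow_zero, mul_one, hR0def, div_mul_cancel₀]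
        exact (hpos 0 0 (by omega)).ne'
    | succ n ih =>
      obtain ⟨h5, h6⟩ := ih
      have hapos : 0 < w n 0 := hpos n 0 (by omega)
      have hXpos : 0 < w n i := hpos n i (by omega)
      have hs0 : 0 < w n k := hpos n k (by omega)
      have hsumnn : 0 ≤ ∑ j ∈ range k, w n j :=
        Finset.sum_nonneg fun j hj => (hpos n j (by simp only [mem_range] at hj; omega)).le
      have hs1 : w n k ≤ 1 := by have := hsplit n; linarith
      have hpown : lam ^ n ≤ 1 := pow_le_one₀ hlam0.le hlam1.le
      have hRc1 : R0 * lam ^ n ≤ 1 := by nlinarith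
      have hXa : w n i ≤ w n 0 := by nlinarith
      have hja : ∀ j, j < k → w n j ≤ w n 0 := by
        intro j hj
        rcases lt_or_ge j i with h | h
        · rw [hlead n j h]
        · exact le_trans (hdom n j h hj) hXa
      have hta : 1 - w n k ≤ k * w n 0 := by
        have h1 : ∑ j ∈ range k, w n j ≤ ∑ j ∈ range k, w n 0 :=
          Finset.sum_le_sum fun j hj => hja j (by simpa using hj)
        rw [Finset.sum_const, card_range, nsmul_eq_mul] at h1
        have := hsplit n
        linarith
      have hdela : del ≤ w n 0 := by
        rw [hdeldef, div_le_iff₀ hk0]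
        nlinarith
      have ha1 : w n 0 ≤ 1 := by
        have h2 : w n 0 ≤ ∑ j ∈ range k, w n j :=
          Finset.single_le_sum (fun j hj => (hpos n j (by simp only [mem_range] at hj; omega)).le)
            (Finset.mem_range.2 (by omega))
        have := hsplit n
        linarith
      constructor
      · -- tau ≤ 1 - w (n+1) k
        have hform : 1 - w (n+1) k = ∑ j ∈ range k, (w n j)^2 + 2 * w n k * (1 - w n k) := by
          have h1 := hsplit (n+1)
          have h2 : ∑ j ∈ range k, w (n+1) j
              = ∑ j ∈ range k, ((w n j)^2 + 2 * w n j * w n k) :=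
            Finset.sum_congr rfl fun j hj => hstep n j (by simpa using hj)
          have h3 : ∑ j ∈ range k, ((w n j)^2 + 2 * w n j * w n k)
              = ∑ j ∈ range k, (w n j)^2 + 2 * w n k * (∑ j ∈ range k, w n j) := by
            rw [Finset.sum_add_distrib]
            congr 1
            rw [Finset.mul_sum]
            exact Finset.sum_congr rfl fun j _ => by ring
          have h4 := hsplit n
          rw [h2, h3] at h1
          have h5' : (∑ j ∈ range k, w n j) = 1 - w n k := by linarith
          rw [h5'] at h1
          linarith
        have hsq : (w n 0)^2 ≤ ∑ j ∈ range k, (w n j)^2 := by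
          apply Finset.single_le_sum (f := fun j => (w n j)^2) (fun j _ => sq_nonneg _)
          exact Finset.mem_range.2 (by omega)
        rcases le_or_gt (1/2 : ℝ) (w n k) with hc | hc
        · rw [hform]
          nlinarith
        · have h2ka : 1 ≤ 2 * (k:ℝ) * w n 0 := by nlinarith
          have htau2 : tau ≤ 1/(4*(k:ℝ)^2) := htaudef ▸ min_le_right _ _
          have ha2 : 1/(4*(k:ℝ)^2) ≤ (w n 0)^2 := by
            rw [div_le_iff₀ (by positivity)]
            nlinarith
          rw [hform]
          nlinarith
      · -- ratio contraction
        rw [hstep n i hik, hstep n 0 (by omega)]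
        obtain ⟨Rc, hRcdef⟩ : ∃ r : ℝ, r = R0 * lam ^ n := ⟨_, rfl⟩
        have hgoal : R0 * lam ^ (n+1) = Rc * lam := by rw [hRcdef, pow_succ]; ring
        rw [hgoal]
        rw [← hRcdef] at h6
        have hRcpos : 0 < Rc := by rw [hRcdef]; positivity
        have hRcR0 : Rc ≤ R0 := by rw [hRcdef]; nlinarith
        have hRclt1 : Rc < 1 := lt_of_le_of_lt hRcR0 hR01
        have step1 : (w n i)^2 + 2 * w n i * w n k ≤ (Rc * w n 0)^2 + 2 * (Rc * w n 0) * w n k := by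
          nlinarith
        have hd2 : (0:ℝ) < del + 2 := by linarith
        have hkey2 : (1 - R0) * del * (w n 0 + 2 * w n k) ≤ (1 - Rc) * w n 0 * (del + 2) := by
          nlinarith [mul_nonneg (mul_nonneg (sub_nonneg.2 hRcR0) hdelpos.le) hapos.le,
            mul_nonneg (mul_nonneg (sub_nonneg.2 hRcR0) hdelpos.le) hs0.le,
            mul_nonneg (sub_nonneg.2 hRclt1.le)
              (show (0:ℝ) ≤ w n 0 - del * w n k by nlinarith)]
        have step2core : Rc * w n 0 + 2 * w n k ≤ lam * (w n 0 + 2 * w n k) := by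
          have hlam2 : lam = ((del + 2) - (1 - R0) * del)/(del + 2) := by
            rw [hlamdef]; field_simp
          rw [hlam2, div_mul_eq_mul_div, le_div_iff₀ hd2]
          nlinarith
        have step2 := mul_le_mul_of_nonneg_left step2core (mul_pos hRcpos hapos).le
        nlinarith [step1, step2]
  -- consequences of the key invariant
  have hpown : ∀ n, lam ^ n ≤ 1 := fun n => pow_le_one₀ hlam0.le hlam1.le
  have hRcle1 : ∀ n, R0 * lam ^ n ≤ 1 := by
    intro n
    nlinarith [mul_nonneg hR0pos.le (sub_nonneg.2 (hpown n))]
  have hXa : ∀ n, w n i ≤ w n 0 := by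
    intro n
    have h6 := (key n).2
    nlinarith [mul_nonneg (sub_nonneg.2 (hRcle1 n)) (hpos n 0 (by omega)).le]
  have hja : ∀ n j, j < k → w n j ≤ w n 0 := by
    intro n j hj
    rcases lt_or_ge j i with h | h
    · rw [hlead n j h]
    · exact le_trans (hdom n j h hj) (hXa n)
  have hdelA : ∀ n, del ≤ w n 0 := by
    intro n
    have h5 := (key n).1
    have h1 : ∑ j ∈ range k, w n j ≤ ∑ j ∈ range k, w n 0 :=
      Finset.sum_le_sum fun j hj => hja n j (by simpa using hj)
    rw [Finset.sum_const, card_range, nsmul_eq_mul] at h1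
    have h2 := hsplit n
    rw [hdeldef, div_le_iff₀ hk0]
    nlinarith
  have ha1 : ∀ n, w n 0 ≤ 1 := by
    intro n
    have h2 : w n 0 ≤ ∑ j ∈ range k, w n j := by
      apply Finset.single_le_sum (f := fun j => w n j)
        (fun j hj => (hpos n j (by simp only [mem_range] at hj; omega)).le)
      exact Finset.mem_range.2 (by omega)
    have h3 := hsplit n
    have := hpos n k (by omega)
    linarith
  have hXb : ∀ n, w n i ≤ R0 * lam ^ n := by
    intro n
    have h6 := (key n).2
    nlinarith [mul_nonneg (mul_nonneg hR0pos.le (pow_nonneg hlam0.le n))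
      (sub_nonneg.2 (ha1 n))]
  -- the non-leader mass
  obtain ⟨eps, hepsdef⟩ : ∃ e : ℕ → ℝ, ∀ n, e n = 1 - w n k - i * w n 0 := ⟨_, fun _ => rfl⟩
  have hepsformula : ∀ n, eps n = ∑ j ∈ Ico i k, w n j := by
    intro n
    have h1 : ∑ j ∈ range i, w n j + ∑ j ∈ Ico i k, w n j = ∑ j ∈ range k, w n j := by
      rw [Finset.range_eq_Ico, Finset.range_eq_Ico]
      exact Finset.sum_Ico_consecutive (fun j => w n j) (Nat.zero_le i) hik.le
    have h2 : ∑ j ∈ range i, w n j = i * w n 0 := by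
      rw [Finset.sum_congr rfl (fun j hj => hlead n j (Finset.mem_range.1 hj)),
        Finset.sum_const, card_range, nsmul_eq_mul]
    have h3 := hsplit n
    rw [hepsdef]
    linarith
  have heps0 : ∀ n, 0 ≤ eps n := by
    intro n
    rw [hepsformula]
    exact Finset.sum_nonneg fun j hj =>
      (hpos n j (by have := (Finset.mem_Ico.1 hj).2; omega)).le
  have hepsub : ∀ n, eps n ≤ ((k:ℝ) * R0) * lam ^ n := by
    intro n
    rw [hepsformula]
    have h1 : ∀ j ∈ Ico i k, w n j ≤ R0 * lam ^ n := by
      intro j hj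
      obtain ⟨hji, hjk⟩ := Finset.mem_Ico.1 hj
      exact le_trans (hdom n j hji hjk) (hXb n)
    have h2 := Finset.sum_le_card_nsmul (Ico i k) _ _ h1
    rw [Nat.card_Ico, nsmul_eq_mul] at h2
    have h3 : ((k - i : ℕ):ℝ) ≤ (k:ℝ) := by
      have : (k - i : ℕ) ≤ k := Nat.sub_le _ _
      exact_mod_cast this
    have h4 : 0 ≤ R0 * lam ^ n := mul_nonneg hR0pos.le (pow_nonneg hlam0.le n)
    nlinarith
  -- fixed point constants
  obtain ⟨m, hmdef⟩ : ∃ t : ℝ, t = 2*(i:ℝ) - 1 := ⟨_, rfl⟩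
  have hiR : (1:ℝ) ≤ (i:ℝ) := by exact_mod_cast hi1
  have hiRpos : (0:ℝ) < (i:ℝ) := by linarith
  have hikR : (i:ℝ) ≤ (k:ℝ) := by exact_mod_cast hik.le
  have hm1 : 1 ≤ m := by rw [hmdef]; linarith
  have hm0 : 0 < m := by linarith
  obtain ⟨astar, hastar⟩ : ∃ t : ℝ, t = 1/m := ⟨_, rfl⟩
  have hmast : m * astar = 1 := by rw [hastar]; field_simp
  have hrec : ∀ n, w (n+1) 0 - astar = -(m * (w n 0 - astar)^2) - 2 * eps n * w n 0 := by
    intro n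
    have h1 := hstep n 0 (by omega)
    have h2 : w n k = 1 - i * w n 0 - eps n := by have := hepsdef n; linarith
    have hmne2 : 2*(i:ℝ) - 1 ≠ 0 := by nlinarith
    rw [h1, h2, hastar, hmdef]
    field_simp
    ring
  -- contraction factor
  obtain ⟨mu, hmudef⟩ : ∃ t : ℝ, t = max (1 - m*del) (1 - 1/(i:ℝ)) := ⟨_, rfl⟩
  have htau2 : tau ≤ 1/(4*(k:ℝ)^2) := htaudef ▸ min_le_right _ _
  have hmdel1 : m * del < 1 := by
    have h1 : m ≤ 2*(k:ℝ) := by rw [hmdef]; linarith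
    have h2 : del * (k:ℝ) ≤ 1/(4*(k:ℝ)^2) := by
      rw [hdeldef, div_mul_cancel₀ _ hk0.ne']
      exact htau2
    nlinarith [mul_le_mul_of_nonneg_right h1 hdelpos.le,
      one_div_le_one_div_of_le (by norm_num : (0:ℝ) < 16)
        (by nlinarith : (16:ℝ) ≤ 4*(k:ℝ)^2)]
  have hmu1 : mu < 1 := by
    rw [hmudef]
    apply max_lt
    · nlinarith
    · have : 0 < 1/(i:ℝ) := by positivity
      linarith
  have hmu0 : 0 ≤ mu := by
    rw [hmudef]
    have : 1/(i:ℝ) ≤ 1 := by rw [div_le_one hiRpos]; exact hiR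
    exact le_trans (by linarith) (le_max_right _ _)
  have hai : ∀ n, (i:ℝ) * w n 0 ≤ 1 := by
    intro n
    have h1 := heps0 n
    have h2 := hepsdef n
    have h3 := hpos n k (by omega)
    linarith
  have hcontr : ∀ n, m * |w n 0 - astar| ≤ mu := by
    intro n
    have hmi : m * (1/(i:ℝ)) = 2 - 1/(i:ℝ) := by rw [hmdef]; field_simp
    rcases abs_cases (w n 0 - astar) with ⟨habs, hge⟩ | ⟨habs, hlt'⟩
    · rw [habs]
      have h1 : w n 0 ≤ 1/(i:ℝ) := by
        rw [le_div_iff₀ hiRpos]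
        nlinarith [hai n]
      have h2 : m * w n 0 ≤ m * (1/(i:ℝ)) := mul_le_mul_of_nonneg_left h1 hm0.le
      have h3 : m * (w n 0 - astar) ≤ 1 - 1/(i:ℝ) := by
        have := hmast
        nlinarith
      exact le_trans h3 (hmudef ▸ le_max_right _ _)
    · rw [habs]
      have h2 : m * del ≤ m * w n 0 := mul_le_mul_of_nonneg_left (hdelA n) hm0.le
      have h3 : m * -(w n 0 - astar) ≤ 1 - m*del := by nlinarith [hmast]
      exact le_trans h3 (hmudef ▸ le_max_left _ _)
  have hestep : ∀ n, |w (n+1) 0 - astar| ≤ mu * |w n 0 - astar| + (2*(k:ℝ)*R0) * lam ^ n := by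
    intro n
    rw [hrec n]
    have h1 := hcontr n
    have h2 := heps0 n
    have h3 := hepsub n
    have h4 := (hpos n 0 (by omega)).le
    have h5 := ha1 n
    have h6 := mul_le_mul_of_nonneg_right h1 (abs_nonneg (w n 0 - astar))
    have h7 := sq_abs (w n 0 - astar)
    have h8 : (0:ℝ) ≤ lam ^ n := pow_nonneg hlam0.le n
    have h9 : 0 ≤ eps n * (1 - w n 0) := mul_nonneg h2 (by linarith)
    have u1 : -(m*(w n 0 - astar)^2) ≤ 0 := by nlinarith [sq_nonneg (w n 0 - astar)]
    have u2 : (0:ℝ) ≤ 2 * eps n * w n 0 := by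
      have := mul_nonneg h2 h4; linarith [mul_nonneg h2 h4]
    have u3 : (0:ℝ) ≤ mu * |w n 0 - astar| := mul_nonneg hmu0 (abs_nonneg _)
    have u4 : (0:ℝ) ≤ (2*(k:ℝ)*R0) * lam ^ n :=
      mul_nonneg (mul_nonneg (by positivity) hR0pos.le) h8
    have l1 : m*(w n 0 - astar)^2 ≤ mu * |w n 0 - astar| := by nlinarith [h6, h7]
    have l2 : 2 * eps n * w n 0 ≤ 2 * eps n := by nlinarith [h9]
    have l3 : 2 * eps n ≤ 2*((k:ℝ) * R0 * lam ^ n) := by linarith [h3]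
    rw [abs_le]
    constructor
    · nlinarith [l1, l2, l3]
    · linarith [u1, u2, u3, u4]
  have habsTendsto : Tendsto (fun n => |w n 0 - astar|) atTop (𝓝 0) :=
    tendsto_zero_of_contract _ mu (2*(k:ℝ)*R0) lam hmu0 hmu1 hlam0.le hlam1
      (mul_nonneg (mul_nonneg (by norm_num) hk0.le) hR0pos.le) (fun n => abs_nonneg _) hestep
  have haTendsto : Tendsto (fun n => w n 0) atTop (𝓝 astar) := by
    rw [tendsto_iff_dist_tendsto_zero]
    simpa [Real.dist_eq] using habsTendsto
  have hgeo : Tendsto (fun n : ℕ => R0 * lam ^ n) atTop (𝓝 0) := by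
    have := (tendsto_pow_atTop_nhds_zero_of_lt_one hlam0.le hlam1).const_mul R0
    simpa using this
  have hepsTendsto : Tendsto eps atTop (𝓝 0) := by
    apply squeeze_zero heps0 hepsub
    have := (tendsto_pow_atTop_nhds_zero_of_lt_one hlam0.le hlam1).const_mul ((k:ℝ)*R0)
    simpa using this
  have hsTendsto : Tendsto (fun n => w n k) atTop (𝓝 (1 - i*astar)) := by
    have h1 : ∀ n, w n k = 1 - i * w n 0 - eps n := by
      intro n; have := hepsdef n; linarith
    rw [tendsto_congr h1]
    have h2 : Tendsto (fun n => 1 - (i:ℝ) * w n 0 - eps n) atTop (𝓝 (1 - i*astar - 0)) :=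
      (tendsto_const_nhds.sub (haTendsto.const_mul _)).sub hepsTendsto
    simpa using h2
  -- assemble
  rw [tendsto_pi_nhds]
  intro j
  rcases lt_or_ge j.val i with hji | hji
  · rw [if_pos hji]
    have hcong : ∀ n, q n j = w n 0 := fun n => by rw [hw n j, hlead n j.val hji]
    rw [tendsto_congr hcong]
    have : astar = 1 / (2*(i:ℝ) - 1) := by rw [hastar, hmdef]
    rw [← this]
    exact haTendsto
  · rcases lt_or_ge j.val k with hjk | hjk
    · rw [if_neg (by omega), if_pos hjk]
      apply squeeze_zero (fun n => ((hsimp n).2 j).le) (g := fun n => R0 * lam ^ n) _ hgeo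
      intro n
      rw [hw n j]
      exact le_trans (hdom n j.val hji hjk) (hXb n)
    · rw [if_neg (by omega), if_neg (by omega)]
      have hjval : j.val = k := by have := j.isLt; omega
      have hcong : ∀ n, q n j = w n k := fun n => by rw [hw n j, hjval]
      rw [tendsto_congr hcong]
      have : 1 - (i:ℝ)*astar = ((i:ℝ) - 1) / (2*(i:ℝ) - 1) := by
        rw [hastar, hmdef]
        have hmne2 : 2*(i:ℝ) - 1 ≠ 0 := by nlinarith
        rw [eq_div_iff hmne2, sub_mul, mul_assoc, one_div, inv_mul_cancel₀ hmne2]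
        ring
      rw [← this]
      exact hsTendsto
end

section
/- Let k ≥ 2 and p ∈ Δ_k with p_1 = max_{1≤j≤k} p_j and z(p) ≥ 0, where z(x) = x_{k+1} − Σ_{i=2}^k x_i. Then for every n ≥ 0, z(F^n(p)) ≥ z(p)^{2^n}. (In particular, there is no uniform rate of convergence in Theorem 1: if z(p) = 2^{−2^{−n}} then z(F^n(p)) ≥ 1/2.) -/
open Filter Topology

/-- z(x) = x_{k+1} − Σ_{i=2}^k x_i (0-indexed: last coordinate minus the sum
of coordinates 1,…,k−1). -/
noncomputable def zfun (k : ℕ) (x : Fin (k + 1) → ℝ) : ℝ :=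
  x (Fin.last k) - ∑ j : Fin (k + 1), if 1 ≤ j.val ∧ j.val < k then x j else 0

lemma sq_sum_aux {m : ℕ} (f : Fin m → ℝ) (s : Finset (Fin m)) :
    (∑ i ∈ s, f i)^2 = (∑ i ∈ s, f i^2)
      + 2 * ∑ a ∈ s, ∑ b ∈ s, if a < b then f a * f b else 0 := by
  classical
  induction s using Finset.induction_on with
  | empty => simp
  | @insert a s ha ih =>
    have key : ∑ a' ∈ insert a s, ∑ b ∈ insert a s, (if a' < b then f a' * f b else 0)
        = f a * (∑ b ∈ s, f b)
          + ∑ a' ∈ s, ∑ b ∈ s, (if a' < b then f a' * f b else 0) := by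
      rw [Finset.sum_insert ha]
      simp only [Finset.sum_insert ha]
      rw [if_neg (lt_irrefl a), Finset.sum_add_distrib]
      have h2 : (∑ b ∈ s, if a < b then f a * f b else 0)
          + ∑ a' ∈ s, (if a' < a then f a' * f a else 0) = ∑ b ∈ s, f a * f b := by
        rw [← Finset.sum_add_distrib]
        refine Finset.sum_congr rfl ?_
        intro b hb
        have hne : b ≠ a := fun h => ha (h ▸ hb)
        rcases lt_or_gt_of_ne hne with h | h
        · rw [if_neg (asymm h), if_pos h]; ring
        · rw [if_pos h, if_neg (asymm h)]; ring
      rw [Finset.mul_sum]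
      linarith [h2]
    rw [Finset.sum_insert ha, Finset.sum_insert ha, key]
    linear_combination ih

lemma sq_sum_aux2 (k : ℕ) (x : Fin (k+1) → ℝ) :
    (∑ i : Fin (k+1), if i.val < k then x i else 0)^2
      = (∑ i : Fin (k+1), if i.val < k then (x i)^2 else 0)
        + 2 * ∑ a : Fin (k+1), ∑ b : Fin (k+1),
            (if a.val < b.val ∧ b.val < k then x a * x b else 0) := by
  classical
  set S : Finset (Fin (k+1)) := Finset.univ.filter (fun i => i.val < k) with hS
  have h1 : (∑ i : Fin (k+1), if i.val < k then x i else 0) = ∑ i ∈ S, x i := by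
    rw [hS, Finset.sum_filter]
  have h2 : (∑ i : Fin (k+1), if i.val < k then (x i)^2 else 0) = ∑ i ∈ S, (x i)^2 := by
    rw [hS, Finset.sum_filter]
  have h3 : (∑ a : Fin (k+1), ∑ b : Fin (k+1),
        (if a.val < b.val ∧ b.val < k then x a * x b else 0))
      = ∑ a ∈ S, ∑ b ∈ S, (if a < b then x a * x b else 0) := by
    rw [hS, Finset.sum_filter]
    refine Finset.sum_congr rfl ?_
    intro a _
    by_cases hak : a.val < k
    · rw [if_pos hak, Finset.sum_filter]
      refine Finset.sum_congr rfl ?_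
      intro b _
      by_cases hbk : b.val < k
      · by_cases hab : a < b
        · rw [if_pos ⟨hab, hbk⟩, if_pos hbk, if_pos hab]
        · rw [if_neg (fun h => hab h.1), if_pos hbk, if_neg hab]
      · rw [if_neg (fun h => hbk h.2), if_neg hbk]
    · rw [if_neg hak]
      refine Finset.sum_eq_zero ?_
      intro b _
      exact if_neg (fun h => hak (lt_trans h.1 h.2))
  rw [h1, h2, h3]
  exact sq_sum_aux x S

lemma zfun_Fmap (k : ℕ) (hk : 0 < k) (x : Fin (k + 1) → ℝ) :
    zfun k (Fmap k x) = (zfun k x) ^ 2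
      + 2 * ∑ i : Fin (k + 1),
          (if 1 ≤ i.val ∧ i.val < k then x i * (x 0 - x i) else 0) := by
  classical
  have hlast : Fmap k x (Fin.last k)
      = x (Fin.last k) ^ 2 + 2 * ∑ a : Fin (k+1), ∑ b : Fin (k+1),
          (if a.val < b.val ∧ b.val < k then x a * x b else 0) := by
    simp [Fmap]
  have hsplit : ∀ f : Fin (k+1) → ℝ,
      (∑ i : Fin (k+1), if i.val < k then f i else 0)
        = f 0 + ∑ i : Fin (k+1), if 1 ≤ i.val ∧ i.val < k then f i else 0 := by
    intro f
    have hpt : ∀ i : Fin (k+1), (if i.val < k then f i else 0)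
        = (if i = 0 then f 0 else 0) + (if 1 ≤ i.val ∧ i.val < k then f i else 0) := by
      intro i
      by_cases h0 : i = 0
      · subst h0; simp [hk]
      · have h1 : 1 ≤ i.val := Nat.one_le_iff_ne_zero.mpr (fun h => h0 (Fin.ext (by simp [h])))
        by_cases hik : i.val < k <;> simp [h0, h1, hik]
    rw [Finset.sum_congr rfl (fun i _ => hpt i), Finset.sum_add_distrib]
    congr 1
    simp
  have hT := sq_sum_aux2 k x
  simp only [hsplit] at hT
  have hFsum : (∑ j : Fin (k+1), if 1 ≤ j.val ∧ j.val < k then Fmap k x j else 0)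
      = (∑ j : Fin (k+1), if 1 ≤ j.val ∧ j.val < k then (x j)^2 else 0)
        + 2 * x (Fin.last k) * (∑ j : Fin (k+1), if 1 ≤ j.val ∧ j.val < k then x j else 0) := by
    rw [Finset.mul_sum, ← Finset.sum_add_distrib]
    refine Finset.sum_congr rfl ?_
    intro j _
    by_cases hj : 1 ≤ j.val ∧ j.val < k
    · rw [if_pos hj, if_pos hj, if_pos hj]
      have hF : Fmap k x j = x j ^ 2 + 2 * x j * x (Fin.last k) := by simp [Fmap, hj.2]
      rw [hF]; ring
    · rw [if_neg hj, if_neg hj, if_neg hj]; ring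
  have hRHS : (∑ i : Fin (k+1), if 1 ≤ i.val ∧ i.val < k then x i * (x 0 - x i) else 0)
      = x 0 * (∑ i : Fin (k+1), if 1 ≤ i.val ∧ i.val < k then x i else 0)
        - (∑ i : Fin (k+1), if 1 ≤ i.val ∧ i.val < k then (x i)^2 else 0) := by
    rw [Finset.mul_sum, ← Finset.sum_sub_distrib]
    refine Finset.sum_congr rfl ?_
    intro i _
    by_cases hi : 1 ≤ i.val ∧ i.val < k
    · rw [if_pos hi, if_pos hi, if_pos hi]; ring
    · rw [if_neg hi, if_neg hi, if_neg hi]; ring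
  simp only [zfun, hlast, hFsum, hRHS]
  linear_combination (-1 : ℝ) * hT

lemma Fmap_nonneg (k : ℕ) (x : Fin (k+1) → ℝ) (hx : ∀ i, 0 ≤ x i) :
    ∀ i, 0 ≤ Fmap k x i := by
  intro i
  unfold Fmap
  split_ifs with h
  · exact add_nonneg (sq_nonneg _)
      (mul_nonneg (mul_nonneg (by norm_num) (hx i)) (hx (Fin.last k)))
  · refine add_nonneg (sq_nonneg _) (mul_nonneg (by norm_num) ?_)
    refine Finset.sum_nonneg fun a _ => Finset.sum_nonneg fun b _ => ?_
    split_ifs with hab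
    · exact mul_nonneg (hx a) (hx b)
    · exact le_refl 0

lemma Fmap_max (k : ℕ) (hk : 0 < k) (x : Fin (k+1) → ℝ) (hx : ∀ i, 0 ≤ x i)
    (hm : ∀ j : Fin (k+1), j.val < k → x j ≤ x 0) :
    ∀ j : Fin (k+1), j.val < k → Fmap k x j ≤ Fmap k x 0 := by
  intro j hj
  have h0 : ((0 : Fin (k+1)) : ℕ) < k := by simpa using hk
  have e1 : Fmap k x j = x j ^ 2 + 2 * x j * x (Fin.last k) := by simp [Fmap, hj]
  have e2 : Fmap k x 0 = x 0 ^ 2 + 2 * x 0 * x (Fin.last k) := by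
    simp only [Fmap]
    rw [if_pos h0]
  rw [e1, e2]
  nlinarith [hm j hj, hx j, hx (Fin.last k)]

/-- If p ∈ Δ_k with p_1 = max_{1≤j≤k} p_j and z(p) ≥ 0, then for every n ≥ 0,
z(F^n(p)) ≥ z(p)^{2^n}. -/
theorem zfun_lower_bound (k : ℕ) (hk : 2 ≤ k) (p : Fin (k + 1) → ℝ)
    (hp : p ∈ simplex k)
    (hmax : ∀ j : Fin (k + 1), j.val < k → p j ≤ p 0)
    (hz : 0 ≤ zfun k p) :
    ∀ n : ℕ, zfun k p ^ 2 ^ n ≤ zfun k ((Fmap k)^[n] p) := by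
  obtain ⟨-, hpos⟩ := hp
  have hk0 : 0 < k := by omega
  have key : ∀ n : ℕ, (∀ i, 0 ≤ (Fmap k)^[n] p i)
      ∧ (∀ j : Fin (k+1), j.val < k → (Fmap k)^[n] p j ≤ (Fmap k)^[n] p 0)
      ∧ zfun k p ^ 2 ^ n ≤ zfun k ((Fmap k)^[n] p) := by
    intro n
    induction n with
    | zero => exact ⟨fun i => (hpos i).le, hmax, by simp⟩
    | succ n ih =>
      obtain ⟨hnn, hm, hzle⟩ := ih
      set q := (Fmap k)^[n] p with hq
      have hit : (Fmap k)^[n+1] p = Fmap k q := by rw [Function.iterate_succ_apply']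
      refine ⟨?_, ?_, ?_⟩
      · rw [hit]; exact Fmap_nonneg k q hnn
      · rw [hit]; exact Fmap_max k hk0 q hnn hm
      · rw [hit]
        have hid := zfun_Fmap k hk0 q
        have hsum : 0 ≤ ∑ i : Fin (k+1),
            (if 1 ≤ i.val ∧ i.val < k then q i * (q 0 - q i) else 0) := by
          refine Finset.sum_nonneg fun i _ => ?_
          split_ifs with hi
          · exact mul_nonneg (hnn i) (sub_nonneg.mpr (hm i hi.2))
          · exact le_refl 0
        have h1 : zfun k p ^ 2 ^ (n+1) = (zfun k p ^ 2 ^ n) ^ 2 := by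
          rw [← pow_mul, pow_succ]
        have h2 : (zfun k p ^ 2 ^ n) ^ 2 ≤ (zfun k q) ^ 2 :=
          pow_le_pow_left₀ (pow_nonneg hz _) hzle 2
        rw [h1]
        linarith [h2, hid, hsum]
  intro n
  exact (key n).2.2
end
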